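/- arXiv:1809.01076 — 2 statements merged into one kernel-verified Lean document; each statement's English description precedes it below -/
import Mathlib

section
/- In the space ℝⁿ with the ℓ¹-norm, two elements f and g satisfy ‖f+g‖₁ = ‖f−g‖₁ = ‖f‖₁ + ‖g‖₁ if and only if f i * g i = 0 for every coordinate i. -/
open Finset

theorem l1_diamond_iff_disjoint_support {n : ℕ} (f g : Fin n → ℝ) :
    ((∑ i, |f i + g i|) = (∑ i, |f i - g i|) ∧
      (∑ i, |f i - g i|) = (∑ i, |f i|) + ∑ i, |g i|)
    ↔ ∀ i, f i * g i = 0 := by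
  constructor
  · rintro ⟨h1, h2⟩ i
    have hsum : (∑ i, (|f i| + |g i|)) = (∑ i, |f i|) + ∑ i, |g i| :=
      Finset.sum_add_distrib
    have hle2 : ∀ j ∈ Finset.univ, |f j - g j| ≤ |f j| + |g j| :=
      fun j _ => abs_sub (f j) (g j)
    have hle1 : ∀ j ∈ Finset.univ, |f j + g j| ≤ |f j| + |g j| :=
      fun j _ => abs_add_le (f j) (g j)
    have heq2 : ∀ j ∈ Finset.univ, |f j - g j| = |f j| + |g j| := by
      rw [← Finset.sum_eq_sum_iff_of_le hle2]
      rw [hsum]; exact h2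
    have heq1 : ∀ j ∈ Finset.univ, |f j + g j| = |f j| + |g j| := by
      rw [← Finset.sum_eq_sum_iff_of_le hle1]
      rw [hsum, h1]; exact h2
    have e1 := heq1 i (Finset.mem_univ i)
    have e2 := heq2 i (Finset.mem_univ i)
    have q1 : (f i + g i) ^ 2 = (|f i| + |g i|) ^ 2 := by rw [← sq_abs (f i + g i), e1]
    have q2 : (f i - g i) ^ 2 = (|f i| + |g i|) ^ 2 := by rw [← sq_abs (f i - g i), e2]
    linear_combination (q1 - q2) / 4
  · intro h
    have key : ∀ i, |f i + g i| = |f i| + |g i| ∧ |f i - g i| = |f i| + |g i| := by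
      intro i
      rcases mul_eq_zero.mp (h i) with hf | hg
      · simp [hf]
      · simp [hg]
    constructor
    · exact Finset.sum_congr rfl fun i _ => by rw [(key i).1, (key i).2]
    · rw [Finset.sum_congr rfl fun i _ => (key i).2, Finset.sum_add_distrib]
end

section
/- Let Z = ℝⁿ with the ℓ¹-norm and e = (ε₁, …, εₙ), εᵢ ∈ {−1,1}. Then the closed unit ball of Z equals the convex hull of F_e ∪ F_{−e}, where F_{±e} = {x : ∑ (±εᵢ) xᵢ = 1, (±εᵢ) xᵢ ≥ 0 ∀ i}; that is, e is a unitary tripotent. -/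
open Finset

theorem l1_unit_ball_eq_convexHull_faces {n : ℕ} (hn : 0 < n)
    (ε : Fin n → ℝ) (hε : ∀ i, ε i = 1 ∨ ε i = -1) :
    {x : Fin n → ℝ | (∑ i, |x i|) ≤ 1}
      = convexHull ℝ
        ({x : Fin n → ℝ | (∑ i, ε i * x i) = 1 ∧ ∀ i, 0 ≤ ε i * x i} ∪
         {x : Fin n → ℝ | (∑ i, (-ε i) * x i) = 1 ∧ ∀ i, 0 ≤ (-ε i) * x i}) := by
  set S := ({x : Fin n → ℝ | (∑ i, ε i * x i) = 1 ∧ ∀ i, 0 ≤ ε i * x i} ∪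
         {x : Fin n → ℝ | (∑ i, (-ε i) * x i) = 1 ∧ ∀ i, 0 ≤ (-ε i) * x i}) with hS
  have hconv : Convex ℝ {x : Fin n → ℝ | (∑ i, |x i|) ≤ 1} := by
    intro p hp q hq a b ha hb hab
    simp only [Set.mem_setOf_eq] at *
    calc ∑ i, |(a • p + b • q) i| ≤ ∑ i, (a * |p i| + b * |q i|) := by
          apply Finset.sum_le_sum; intro i _
          simp only [Pi.add_apply, Pi.smul_apply, smul_eq_mul]
          calc |a * p i + b * q i| ≤ |a * p i| + |b * q i| := abs_add_le _ _
            _ = a * |p i| + b * |q i| := by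
                rw [abs_mul, abs_mul, abs_of_nonneg ha, abs_of_nonneg hb]
      _ = a * ∑ i, |p i| + b * ∑ i, |q i| := by
          rw [Finset.sum_add_distrib, Finset.mul_sum, Finset.mul_sum]
      _ ≤ a * 1 + b * 1 := by gcongr
      _ = 1 := by rw [mul_one, mul_one, hab]
  have key : ∀ (δ : Fin n → ℝ), (∀ i, δ i = 1 ∨ δ i = -1) → ∀ x : Fin n → ℝ,
      (∑ i, δ i * x i) = 1 → (∀ i, 0 ≤ δ i * x i) → (∑ i, |x i|) ≤ 1 := by
    intro δ hδ x h1 h2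
    rw [← h1]
    apply le_of_eq
    apply Finset.sum_congr rfl
    intro i _
    have h2i := h2 i
    rcases hδ i with h | h <;> rw [h] at h2i ⊢
    · rw [one_mul] at h2i ⊢; exact abs_of_nonneg h2i
    · have hx : x i ≤ 0 := by nlinarith
      rw [abs_of_nonpos hx]; ring
  have hSsub : S ⊆ {x : Fin n → ℝ | (∑ i, |x i|) ≤ 1} := by
    rintro x (⟨h1, h2⟩ | ⟨h1, h2⟩)
    · exact key ε hε x h1 h2
    · refine key (fun i => -ε i) (fun i => ?_) x h1 h2
      rcases hε i with h | h <;> simp [h]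
  apply Set.Subset.antisymm _ (by
    rw [hS] at hSsub ⊢
    exact convexHull_min hSsub hconv)
  intro x hx
  simp only [Set.mem_setOf_eq] at hx
  have hT : (0:ℝ) ≤ 1 - ∑ i, |x i| := by linarith
  have hn0 : ((n:ℝ)) ≠ 0 := Nat.cast_ne_zero.mpr hn.ne'
  set c : ℝ := (1 - ∑ i, |x i|) / (2 * n) with hc
  have hn' : (0:ℝ) < 2 * n := by positivity
  have hcn : 0 ≤ c := div_nonneg hT hn'.le
  set w : Fin n × Bool → ℝ :=
    fun p => (if p.2 then max (x p.1) 0 else max (-(x p.1)) 0) + c with hwdef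
  set z : Fin n × Bool → Fin n → ℝ :=
    fun p j => if j = p.1 then (if p.2 then 1 else -1) else 0 with hzdef
  have hw : ∀ p ∈ (Finset.univ : Finset (Fin n × Bool)), 0 ≤ w p := by
    intro p _
    have : (0:ℝ) ≤ (if p.2 then max (x p.1) 0 else max (-(x p.1)) 0) := by
      split <;> exact le_max_right _ _
    simp only [hwdef]; linarith
  have hwsum : ∑ p : Fin n × Bool, w p = 1 := by
    rw [Fintype.sum_prod_type]
    have hb : ∀ i : Fin n, ∑ b : Bool, w (i, b) = |x i| + 2 * c := by
      intro i
      simp only [hwdef, Fintype.sum_bool]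
      simp only [if_true, Bool.false_eq_true, if_false]
      have := max_zero_add_max_neg_zero_eq_abs_self (x i)
      linarith
    rw [Finset.sum_congr rfl fun i _ => hb i, Finset.sum_add_distrib,
      Finset.sum_const, Finset.card_univ, Fintype.card_fin]
    simp only [nsmul_eq_mul, hc]
    field_simp
    ring
  have hz : ∀ p ∈ (Finset.univ : Finset (Fin n × Bool)), z p ∈ S := by
    rintro ⟨i, b⟩ _
    rcases hε i with h | h <;> cases b
    · right
      constructor
      · simp [hzdef, mul_ite, mul_zero, Finset.sum_ite_eq', h]
      · intro j; simp only [hzdef]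
        by_cases hj : j = i <;> simp [hj, h]
    · left
      constructor
      · simp [hzdef, mul_ite, mul_zero, Finset.sum_ite_eq', h]
      · intro j; simp only [hzdef]
        by_cases hj : j = i <;> simp [hj, h]
    · left
      constructor
      · simp [hzdef, mul_ite, mul_zero, Finset.sum_ite_eq', h]
      · intro j; simp only [hzdef]
        by_cases hj : j = i <;> simp [hj, h]
    · right
      constructor
      · simp [hzdef, mul_ite, mul_zero, Finset.sum_ite_eq', h]
      · intro j; simp only [hzdef]
        by_cases hj : j = i <;> simp [hj, h]
  have hmem := Finset.centerMass_mem_convexHull Finset.univ hw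
    (by rw [hwsum]; norm_num) hz
  have hx_eq : Finset.univ.centerMass w z = x := by
    rw [Finset.centerMass, hwsum, inv_one, one_smul]
    funext j
    simp only [Finset.sum_apply, Pi.smul_apply, smul_eq_mul]
    rw [Fintype.sum_prod_type]
    have hb : ∀ i : Fin n, ∑ b : Bool, w (i, b) * z (i, b) j
        = if j = i then x i else 0 := by
      intro i
      simp only [hwdef, hzdef, Fintype.sum_bool]
      by_cases hj : j = i
      · subst hj
        simp only [if_pos rfl, if_true, Bool.false_eq_true, if_false]
        have := max_zero_sub_max_neg_zero_eq_self (x j)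
        ring_nf
        nlinarith [this]
      · simp [hj]
    rw [Finset.sum_congr rfl fun i _ => hb i, Finset.sum_ite_eq _ j]
    simp
  rwa [hx_eq] at hmem
end
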